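/- Let C₁ and C₂ be two circles passing through distinct points x and y, whose centers both lie in the same closed half-plane H delimited by the line through x and y, with the center of C₂ at distance from line(x,y) greater than or equal to the distance of the center of C₁. Then the intersection of the open disk bounded by C₁ with H is contained in the intersection of the open disk bounded by C₂ with H. -/

import Mathlib

noncomputable section

open Metric RealInnerProductSpace

section Aux

local notation "E" => EuclideanSpace ℝ (Fin 2)

/-- In `ℝ²`, two vectors orthogonal to a nonzero vector are dependent. -/
lemma aux_dep (u w v : E) (hu : u ≠ 0) (hw : w ≠ 0) (hwu : ⟪w, u⟫ = 0)
    (hv : ⟪v, u⟫ = 0) : ∃ μ : ℝ, v = μ • w := by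
  have hWrank : Module.finrank ℝ ((ℝ ∙ u)ᗮ : Submodule ℝ E) = 1 := by
    haveI : Fact (Module.finrank ℝ E = 1 + 1) := ⟨by simp [finrank_euclideanSpace]⟩
    exact Submodule.finrank_orthogonal_span_singleton hu
  have hwW : w ∈ (ℝ ∙ u)ᗮ := by
    rw [Submodule.mem_orthogonal_singleton_iff_inner_left]; exact hwu
  have hvW : v ∈ (ℝ ∙ u)ᗮ := by
    rw [Submodule.mem_orthogonal_singleton_iff_inner_left]; exact hv
  have hle : (ℝ ∙ w) ≤ (ℝ ∙ u)ᗮ := by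
    rw [Submodule.span_singleton_le_iff_mem]; exact hwW
  have heq : (ℝ ∙ w) = (ℝ ∙ u)ᗮ := by
    apply Submodule.eq_of_le_of_finrank_le hle
    rw [hWrank, finrank_span_singleton hw]
  rw [← heq, Submodule.mem_span_singleton] at hvW
  obtain ⟨μ, hμ⟩ := hvW
  exact ⟨μ, hμ.symm⟩

/-- Distance to the affine span of a pair, from a point on the
perpendicular through the midpoint. -/
lemma aux_infDist (x y c : E) (hxy : x ≠ y)
    (hperp : ⟪c - midpoint ℝ x y, y - x⟫ = 0) :
    Metric.infDist c (affineSpan ℝ ({x, y} : Set E) : Set E) = ‖c - midpoint ℝ x y‖ := by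
  set m := midpoint ℝ x y with hm
  have hmS : m ∈ (affineSpan ℝ ({x, y} : Set E) : Set E) := by
    have hx : x ∈ affineSpan ℝ ({x, y} : Set E) :=
      mem_affineSpan ℝ (by simp)
    have hy : y ∈ affineSpan ℝ ({x, y} : Set E) :=
      mem_affineSpan ℝ (by simp)
    have h2 := AffineSubspace.smul_vsub_vadd_mem _ (2⁻¹ : ℝ) hy hx hx
    rw [hm, midpoint, AffineMap.lineMap_apply, invOf_eq_inv]
    exact h2
  apply le_antisymm
  · simpa [dist_eq_norm] using Metric.infDist_le_dist_of_mem hmS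
  · by_contra hlt
    push_neg at hlt
    obtain ⟨q, hq, hdq⟩ := (Metric.infDist_lt_iff ⟨m, hmS⟩).1 hlt
    have hqm : q -ᵥ m ∈ (affineSpan ℝ ({x, y} : Set E)).direction :=
      AffineSubspace.vsub_mem_direction hq hmS
    rw [direction_affineSpan, vectorSpan_pair, Submodule.mem_span_singleton] at hqm
    obtain ⟨s, hs⟩ := hqm
    have hinner : ⟪c - m, q - m⟫ = 0 := by
      have : q - m = s • (x - y) := hs.symm
      rw [this, real_inner_smul_right]
      have : ⟪c - m, x - y⟫ = -⟪c - m, y - x⟫ := by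
        rw [← inner_neg_right]; congr 1; abel
      rw [this, hperp]; ring
    have hsq : ‖c - m‖ ^ 2 ≤ (dist c q) ^ 2 := by
      have hexp : (dist c q) ^ 2 = ‖c - m‖ ^ 2 - 2 * ⟪c - m, q - m⟫ + ‖q - m‖ ^ 2 := by
        rw [dist_eq_norm, show c - q = (c - m) - (q - m) by abel, norm_sub_sq_real]
      rw [hexp, hinner]
      nlinarith [sq_nonneg ‖q - m‖]
    exact absurd hdq (not_lt.2 (le_of_pow_le_pow_left₀ two_ne_zero dist_nonneg hsq))

end Aux


/-- Let `C₁`, `C₂` be circles through distinct points `x`, `y` (so their centers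
`c₁`, `c₂` are equidistant from `x` and `y`), whose centers both lie in the same
closed half-plane `H = {p | 0 ≤ f p}` delimited by the line through `x` and `y`
(here `f` is a nonzero linear functional vanishing on that line).  If the center
of `C₂` is at distance from `line(x,y)` at least that of the center of `C₁`,
then `encl(C₁) ∩ H ⊆ encl(C₂) ∩ H`. -/
theorem encl_inter_halfplane_subset
    (x y c₁ c₂ : EuclideanSpace ℝ (Fin 2)) (hxy : x ≠ y)
    (f : EuclideanSpace ℝ (Fin 2) →L[ℝ] ℝ) (hf : f ≠ 0)
    (hfx : f x = 0) (hfy : f y = 0)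
    (hb₁ : dist c₁ x = dist c₁ y) (hb₂ : dist c₂ x = dist c₂ y)
    (hc₁ : 0 ≤ f c₁) (hc₂ : 0 ≤ f c₂)
    (hd : Metric.infDist c₁ (affineSpan ℝ ({x, y} : Set (EuclideanSpace ℝ (Fin 2))) :
            Set (EuclideanSpace ℝ (Fin 2))) ≤
          Metric.infDist c₂ (affineSpan ℝ ({x, y} : Set (EuclideanSpace ℝ (Fin 2))) :
            Set (EuclideanSpace ℝ (Fin 2)))) :
    Metric.ball c₁ (dist c₁ x) ∩ {p | 0 ≤ f p} ⊆
      Metric.ball c₂ (dist c₂ x) ∩ {p | 0 ≤ f p} := by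
  set m : EuclideanSpace ℝ (Fin 2) := midpoint ℝ x y with hmdef
  set w : EuclideanSpace ℝ (Fin 2) := (InnerProductSpace.toDual ℝ (EuclideanSpace ℝ (Fin 2))).symm f with hwdef
  have hwv : ∀ v : EuclideanSpace ℝ (Fin 2), ⟪w, v⟫ = f v := fun v =>
    InnerProductSpace.toDual_symm_apply
  have hw0 : w ≠ 0 := by
    intro h
    apply hf
    ext v
    have := hwv v
    rw [h, inner_zero_left] at this
    simpa using this.symm
  have hu0 : y - x ≠ 0 := sub_ne_zero.2 (Ne.symm hxy)
  have hwu : ⟪w, y - x⟫ = 0 := by rw [hwv]; simp [hfx, hfy]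
  -- midpoint facts
  have hfm : f m = 0 := by
    rw [hmdef, midpoint_eq_smul_add, map_smul, map_add, hfx, hfy]
    simp
  have hdistm : dist x m = dist y m := by
    rw [dist_comm x m, dist_comm y m, dist_midpoint_left, dist_midpoint_right, dist_comm]
  -- perpendicularity of c_i - m to y - x
  have hperp : ∀ c : EuclideanSpace ℝ (Fin 2), dist c x = dist c y → ⟪c - m, y - x⟫ = 0 := by
    intro c hb
    have := EuclideanGeometry.inner_vsub_vsub_of_dist_eq_of_dist_eq
      (c₁ := m) (c₂ := c) (p₁ := x) (p₂ := y) hdistm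
      (by rw [dist_comm x c, dist_comm y c]; exact hb)
    simpa using this
  obtain ⟨μ₁, hμ₁⟩ := aux_dep (y - x) w (c₁ - m) hu0 hw0 hwu (hperp c₁ hb₁)
  obtain ⟨μ₂, hμ₂⟩ := aux_dep (y - x) w (c₂ - m) hu0 hw0 hwu (hperp c₂ hb₂)
  have hww : (0:ℝ) < ⟪w, w⟫ := by
    rw [real_inner_self_eq_norm_sq]
    exact pow_pos (norm_pos_iff.2 hw0) 2
  -- signs
  have hsign : ∀ (c : EuclideanSpace ℝ (Fin 2)) (μ : ℝ), c - m = μ • w → 0 ≤ f c → 0 ≤ μ := by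
    intro c μ hc hfc
    have h1 : ⟪w, c - m⟫ = μ * ⟪w, w⟫ := by rw [hc, real_inner_smul_right]
    have h2 : ⟪w, c - m⟫ = f c := by rw [hwv, map_sub, hfm, sub_zero]
    nlinarith
  have hμ₁0 : 0 ≤ μ₁ := hsign c₁ μ₁ hμ₁ hc₁
  have hμ₂0 : 0 ≤ μ₂ := hsign c₂ μ₂ hμ₂ hc₂
  -- infDist comparison gives μ₁ ≤ μ₂
  have hμle : μ₁ ≤ μ₂ := by
    have h1 := aux_infDist x y c₁ hxy (hperp c₁ hb₁)
    have h2 := aux_infDist x y c₂ hxy (hperp c₂ hb₂)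
    rw [h1, h2, hμ₁, hμ₂, norm_smul, norm_smul] at hd
    have hwn : (0:ℝ) < ‖w‖ := norm_pos_iff.2 hw0
    have : |μ₁| ≤ |μ₂| := by
      simp only [Real.norm_eq_abs] at hd
      exact le_of_mul_le_mul_right hd hwn
    rwa [abs_of_nonneg hμ₁0, abs_of_nonneg hμ₂0] at this
  -- key distance computations
  have hkey : ∀ (c : EuclideanSpace ℝ (Fin 2)) (μ : ℝ), c - m = μ • w → ∀ p : EuclideanSpace ℝ (Fin 2),
      (dist p c) ^ 2 = ‖p - m‖ ^ 2 - 2 * μ * f p + ‖c - m‖ ^ 2 := by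
    intro c μ hc p
    have hpc : p - c = (p - m) - (c - m) := by abel
    rw [dist_eq_norm, hpc, norm_sub_sq_real]
    have : ⟪p - m, c - m⟫ = μ * f p := by
      rw [hc, real_inner_smul_right, real_inner_comm, hwv, map_sub, hfm, sub_zero]
    rw [this]; ring
  have hkey2 : ∀ (c : EuclideanSpace ℝ (Fin 2)), ⟪c - m, y - x⟫ = 0 →
      (dist c x) ^ 2 = ‖x - m‖ ^ 2 + ‖c - m‖ ^ 2 := by
    intro c hp
    have hcx : c - x = (c - m) - (x - m) := by abel
    rw [dist_eq_norm, hcx, norm_sub_sq_real]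
    have hxm : x - m = (-(2⁻¹ : ℝ)) • (y - x) := by
      rw [hmdef, left_sub_midpoint]
      rw [invOf_eq_inv]
      module
    have : ⟪c - m, x - m⟫ = 0 := by
      rw [hxm, real_inner_smul_right, hp, mul_zero]
    rw [this]; ring
  -- main argument
  rintro p ⟨hp1, hp2⟩
  refine ⟨?_, hp2⟩
  rw [Metric.mem_ball, dist_comm] at hp1 ⊢
  have hfp : 0 ≤ f p := hp2
  have hsq1 : (dist c₁ p) ^ 2 < (dist c₁ x) ^ 2 :=
    pow_lt_pow_left₀ hp1 dist_nonneg two_ne_zero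
  rw [dist_comm c₁ p, hkey c₁ μ₁ hμ₁ p, hkey2 c₁ (hperp c₁ hb₁)] at hsq1
  have hsq2 : (dist c₂ p) ^ 2 < (dist c₂ x) ^ 2 := by
    rw [dist_comm c₂ p, hkey c₂ μ₂ hμ₂ p, hkey2 c₂ (hperp c₂ hb₂)]
    nlinarith
  exact lt_of_pow_lt_pow_left₀ 2 dist_nonneg hsq2
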